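/- Let A be a Hopf algebra over a commutative ring, with antipode S, counit ε, and comultiplication Δ, and suppose ψ : A → R is a linear functional satisfying ψ(ab) = ψ(b S²(a)) for all a, b. Then ψ is invariant under the coadjoint action: for all a, x in A, ψ(ad_a(x)) = ε(a) ψ(x), where ad_a(x) = Σ a'_j x S(a''_j) with Δ(a) = Σ a'_j ⊗ a''_j. -/

import Mathlib

open TensorProduct

/-- The adjoint action `ad_a(x) = Σ a₍₁₎ x S(a₍₂₎)` in a Hopf algebra. -/
noncomputable def adAction (R : Type*) {A : Type*} [CommRing R] [Ring A] [HopfAlgebra R A]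
    (a x : A) : A :=
  LinearMap.mul' R A
    ((TensorProduct.map (LinearMap.mulRight R x) (HopfAlgebra.antipode (R := R)))
      (Coalgebra.comul (R := R) a))

open Coalgebra HopfAlgebra

section AuxHopf

open TensorProduct Coalgebra HopfAlgebra

variable {R : Type*} {A : Type*} [CommRing R] [Ring A] [HopfAlgebra R A]

lemma aux_counit_smul_right {ι : Type*} {a : A} (r : Repr R a ι) :
    ∑ i ∈ r.index, counit (R := R) (r.left i) • r.right i = a := by
  have h := Coalgebra.sum_counit_tmul_eq r
  apply_fun (TensorProduct.lid R A) at h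
  simp only [map_sum, TensorProduct.lid_tmul, one_smul] at h
  exact h

lemma aux_counit_smul_left {ι : Type*} {a : A} (r : Repr R a ι) :
    ∑ i ∈ r.index, counit (R := R) (r.right i) • r.left i = a := by
  have h := Coalgebra.sum_tmul_counit_eq r
  apply_fun (TensorProduct.rid R A) at h
  simp only [map_sum, TensorProduct.rid_tmul, one_smul] at h
  exact h

/-- `Σ (S(c₁) c₂) ⊗ c₃ = 1 ⊗ c`. -/
lemma aux_antipode_collapse {ι κ : Type*} {c : A} (rc : Repr R c ι) (c2 : ∀ i : ι, Repr R (rc.right i) κ) :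
    ∑ k ∈ rc.index, ∑ l ∈ (c2 k).index,
      (antipode (R := R) (rc.left k) * (c2 k).left l) ⊗ₜ[R] (c2 k).right l = (1 : A) ⊗ₜ[R] c := by
  classical
  set c1 : ∀ i : ι, Repr R (rc.left i) (A × A) := fun i => Coalgebra.Repr.arbitrary R _ with hc1
  have h := Coalgebra.sum_tmul_tmul_eq rc c1 c2
  set W : A ⊗[R] (A ⊗[R] A) →ₗ[R] A ⊗[R] A :=
    (LinearMap.rTensor A (LinearMap.mul' R A ∘ₗ LinearMap.rTensor A (antipode (R := R)))) ∘ₗ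
      (TensorProduct.assoc R A A A).symm.toLinearMap with hW
  have hWapp : ∀ x y z : A, W (x ⊗ₜ (y ⊗ₜ z)) = (antipode (R := R) x * y) ⊗ₜ z := by
    intro x y z
    simp [hW]
  apply_fun W at h
  simp only [map_sum, hWapp] at h
  rw [← h]
  calc ∑ i ∈ rc.index, ∑ j ∈ (c1 i).index,
        (antipode (R := R) ((c1 i).left j) * (c1 i).right j) ⊗ₜ[R] rc.right i
      = ∑ i ∈ rc.index, (∑ j ∈ (c1 i).index,
        antipode (R := R) ((c1 i).left j) * (c1 i).right j) ⊗ₜ[R] rc.right i := by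
        refine Finset.sum_congr rfl fun i _ => ?_
        rw [TensorProduct.sum_tmul]
    _ = ∑ i ∈ rc.index, (algebraMap R A (counit (R := R) (rc.left i))) ⊗ₜ[R] rc.right i := by
        refine Finset.sum_congr rfl fun i _ => ?_
        rw [HopfAlgebra.sum_antipode_mul_eq_algebraMap_counit (c1 i)]
    _ = (1 : A) ⊗ₜ[R] (∑ i ∈ rc.index, counit (R := R) (rc.left i) • rc.right i) := by
        rw [TensorProduct.tmul_sum]
        refine Finset.sum_congr rfl fun i _ => ?_
        rw [Algebra.algebraMap_eq_smul_one, TensorProduct.smul_tmul]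
    _ = (1 : A) ⊗ₜ[R] c := by rw [aux_counit_smul_right rc]

/-- A representation of `comul (x * y)` built from representations of `comul x`, `comul y`. -/
noncomputable def prodRepr {ι κ : Type*} {x y : A} (rx : Repr R x ι) (ry : Repr R y κ) : Repr R (x * y) (ι × κ) where
  index := rx.index ×ˢ ry.index
  left := fun p => rx.left p.1 * ry.left p.2
  right := fun p => rx.right p.1 * ry.right p.2
  eq := by
    have h : Coalgebra.comul (R := R) (x * y) = Coalgebra.comul x * Coalgebra.comul y :=
      Bialgebra.comul_mul x y
    rw [h, ← rx.eq, ← ry.eq, Finset.sum_mul_sum, Finset.sum_product]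
    simp [Algebra.TensorProduct.tmul_mul_tmul]

lemma antipode_one' : antipode (R := R) (1 : A) = 1 := by
  have h := HopfAlgebra.mul_antipode_rTensor_comul_apply (R := R) (A := A) 1
  rw [Bialgebra.comul_one, Algebra.TensorProduct.one_def] at h
  simpa using h

lemma antipode_mul' (a b : A) :
    antipode (R := R) (a * b) = antipode (R := R) b * antipode (R := R) a := by
  classical
  set ra := Coalgebra.Repr.arbitrary R a with hra
  set rb := Coalgebra.Repr.arbitrary R b with hrb
  set r2 : ∀ i : A × A, Repr R (ra.right i) (A × A) := fun i => Coalgebra.Repr.arbitrary R _ with hr2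
  set s2 : ∀ k : A × A, Repr R (rb.right k) (A × A) := fun k => Coalgebra.Repr.arbitrary R _ with hs2
  set X : A := ∑ k ∈ rb.index, ∑ l ∈ (s2 k).index, ∑ i ∈ ra.index, ∑ j ∈ (r2 i).index,
    antipode (R := R) (rb.left k) *
      ((antipode (R := R) (ra.left i) * (r2 i).left j) *
        ((s2 k).left l * antipode (R := R) ((r2 i).right j * (s2 k).right l))) with hX
  -- Direction 1 : X = antipode (a * b)
  have key1 : ∀ p q n : A, (∑ i ∈ ra.index, ∑ j ∈ (r2 i).index,
      p * ((antipode (R := R) (ra.left i) * (r2 i).left j) *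
        (q * antipode (R := R) ((r2 i).right j * n))))
      = p * (q * antipode (R := R) (a * n)) := by
    intro p q n
    set Φ : A ⊗[R] A →ₗ[R] A :=
      (LinearMap.mulLeft R p) ∘ₗ (LinearMap.mul' R A) ∘ₗ
        (LinearMap.lTensor A ((LinearMap.mulLeft R q) ∘ₗ (antipode (R := R)) ∘ₗ
          (LinearMap.mulRight R n))) with hΦ
    have hΦapp : ∀ u v : A, Φ (u ⊗ₜ v) = p * (u * (q * antipode (R := R) (v * n))) := by
      intro u v; simp [hΦ]
    have h := congrArg Φ (aux_antipode_collapse ra r2)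
    simp only [map_sum, hΦapp] at h
    rw [h, one_mul]
  have keyX1 : X = antipode (R := R) (a * b) := by
    rw [hX]
    calc (∑ k ∈ rb.index, ∑ l ∈ (s2 k).index, ∑ i ∈ ra.index, ∑ j ∈ (r2 i).index,
        antipode (R := R) (rb.left k) *
          ((antipode (R := R) (ra.left i) * (r2 i).left j) *
            ((s2 k).left l * antipode (R := R) ((r2 i).right j * (s2 k).right l))))
        = ∑ k ∈ rb.index, ∑ l ∈ (s2 k).index,
          antipode (R := R) (rb.left k) *
            ((s2 k).left l * antipode (R := R) (a * (s2 k).right l)) := by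
          refine Finset.sum_congr rfl fun k _ => Finset.sum_congr rfl fun l _ => ?_
          exact key1 _ _ _
      _ = ∑ k ∈ rb.index, ∑ l ∈ (s2 k).index,
          (antipode (R := R) (rb.left k) * (s2 k).left l) *
            antipode (R := R) (a * (s2 k).right l) := by
          simp [mul_assoc]
      _ = antipode (R := R) (a * b) := by
          set Ψ : A ⊗[R] A →ₗ[R] A :=
            (LinearMap.mul' R A) ∘ₗ
              (LinearMap.lTensor A ((antipode (R := R)) ∘ₗ (LinearMap.mulLeft R a))) with hΨ
          have hΨapp : ∀ u v : A, Ψ (u ⊗ₜ v) = u * antipode (R := R) (a * v) := by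
            intro u v; simp [hΨ]
          have h := congrArg Ψ (aux_antipode_collapse rb s2)
          simp only [map_sum, hΨapp] at h
          rw [h, one_mul]
  -- Direction 2 : X = antipode b * antipode a
  have key2 : ∀ (i : A × A) (k : A × A), (∑ j ∈ (r2 i).index, ∑ l ∈ (s2 k).index,
      ((r2 i).left j * (s2 k).left l) *
        antipode (R := R) ((r2 i).right j * (s2 k).right l))
      = algebraMap R A (counit (R := R) (ra.right i) * counit (R := R) (rb.right k)) := by
    intro i k
    have h := HopfAlgebra.sum_mul_antipode_eq_algebraMap_counit (prodRepr (r2 i) (s2 k))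
    rw [← Finset.sum_product', ← Bialgebra.counit_mul]
    exact h
  have keyX2 : X = antipode (R := R) b * antipode (R := R) a := by
    rw [hX]
    calc (∑ k ∈ rb.index, ∑ l ∈ (s2 k).index, ∑ i ∈ ra.index, ∑ j ∈ (r2 i).index,
        antipode (R := R) (rb.left k) *
          ((antipode (R := R) (ra.left i) * (r2 i).left j) *
            ((s2 k).left l * antipode (R := R) ((r2 i).right j * (s2 k).right l))))
        = ∑ k ∈ rb.index, ∑ i ∈ ra.index, ∑ j ∈ (r2 i).index, ∑ l ∈ (s2 k).index,
          (antipode (R := R) (rb.left k) * antipode (R := R) (ra.left i)) *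
            (((r2 i).left j * (s2 k).left l) *
              antipode (R := R) ((r2 i).right j * (s2 k).right l)) := by
          refine Finset.sum_congr rfl fun k _ => ?_
          rw [Finset.sum_comm]
          refine Finset.sum_congr rfl fun i _ => ?_
          rw [Finset.sum_comm]
          refine Finset.sum_congr rfl fun j _ => Finset.sum_congr rfl fun l _ => ?_
          simp [mul_assoc]
      _ = ∑ k ∈ rb.index, ∑ i ∈ ra.index,
          (antipode (R := R) (rb.left k) * antipode (R := R) (ra.left i)) *
            algebraMap R A (counit (R := R) (ra.right i) * counit (R := R) (rb.right k)) := by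
          refine Finset.sum_congr rfl fun k _ => Finset.sum_congr rfl fun i _ => ?_
          simp only [← Finset.mul_sum]
          rw [key2 i k]
      _ = ∑ k ∈ rb.index, ∑ i ∈ ra.index,
          counit (R := R) (rb.right k) •
            (antipode (R := R) (rb.left k) *
              (counit (R := R) (ra.right i) • antipode (R := R) (ra.left i))) := by
          refine Finset.sum_congr rfl fun k _ => Finset.sum_congr rfl fun i _ => ?_
          rw [← Algebra.commutes, ← Algebra.smul_def]
          rw [mul_smul_comm, smul_smul,
            mul_comm (counit (R := R) (ra.right i)) (counit (R := R) (rb.right k))]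
      _ = antipode (R := R) b * antipode (R := R) a := by
          simp only [← Finset.mul_sum, ← Finset.smul_sum]
          have ha : (∑ i ∈ ra.index,
              counit (R := R) (ra.right i) • antipode (R := R) (ra.left i))
              = antipode (R := R) a := by
            calc ∑ i ∈ ra.index, counit (R := R) (ra.right i) • antipode (R := R) (ra.left i)
                = antipode (R := R) (∑ i ∈ ra.index, counit (R := R) (ra.right i) • ra.left i) := by
                  rw [map_sum]
                  exact Finset.sum_congr rfl fun i _ => (map_smul _ _ _).symm
              _ = antipode (R := R) a := by rw [aux_counit_smul_left ra]
          rw [ha]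
          have hb : (∑ k ∈ rb.index,
              counit (R := R) (rb.right k) • antipode (R := R) (rb.left k))
              = antipode (R := R) b := by
            calc ∑ k ∈ rb.index, counit (R := R) (rb.right k) • antipode (R := R) (rb.left k)
                = antipode (R := R) (∑ k ∈ rb.index, counit (R := R) (rb.right k) • rb.left k) := by
                  rw [map_sum]
                  exact Finset.sum_congr rfl fun k _ => (map_smul _ _ _).symm
              _ = antipode (R := R) b := by rw [aux_counit_smul_left rb]
          rw [← hb, Finset.sum_mul]
          exact Finset.sum_congr rfl fun k _ => (smul_mul_assoc _ _ _).symm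
  rw [← keyX1, keyX2]

end AuxHopf

/-- if `ψ(ab) = ψ(b S²(a))` for all `a, b`, then `ψ` is invariant
under the coadjoint action: `ψ(ad_a(x)) = ε(a) ψ(x)`. -/

theorem invariant_functional_of_qtrace_property
    {R A : Type*} [CommRing R] [Ring A] [HopfAlgebra R A]
    (hS : Function.Bijective (HopfAlgebra.antipode (R := R) (A := A)))
    (ψ : A →ₗ[R] R)
    (hψ : ∀ a b : A, ψ (a * b) =
      ψ (b * HopfAlgebra.antipode (R := R) (HopfAlgebra.antipode (R := R) a))) :
    ∀ a x : A, ψ (adAction R a x) = Coalgebra.counit (R := R) a * ψ x := by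
  intro a x
  classical
  unfold adAction
  set ra := Coalgebra.Repr.arbitrary R a with hra
  have had : (LinearMap.mul' R A
      ((TensorProduct.map (LinearMap.mulRight R x) (HopfAlgebra.antipode (R := R)))
        (Coalgebra.comul (R := R) a)))
      = ∑ i ∈ ra.index, ra.left i * (x * antipode (R := R) (ra.right i)) := by
    rw [← ra.eq]
    simp [map_sum, mul_assoc]
  rw [had]
  calc ψ (∑ i ∈ ra.index, ra.left i * (x * antipode (R := R) (ra.right i)))
      = ∑ i ∈ ra.index, ψ (ra.left i * (x * antipode (R := R) (ra.right i))) := map_sum _ _ _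
    _ = ∑ i ∈ ra.index, ψ ((x * antipode (R := R) (ra.right i)) *
          antipode (R := R) (antipode (R := R) (ra.left i))) := by
        exact Finset.sum_congr rfl fun i _ => hψ _ _
    _ = ∑ i ∈ ra.index, ψ (x * antipode (R := R) (antipode (R := R) (ra.left i) * ra.right i)) := by
        refine Finset.sum_congr rfl fun i _ => ?_
        rw [antipode_mul', mul_assoc]
    _ = ψ (x * antipode (R := R) (∑ i ∈ ra.index, antipode (R := R) (ra.left i) * ra.right i)) := by
        conv_rhs => rw [map_sum, Finset.mul_sum, map_sum]
    _ = ψ (x * antipode (R := R) (algebraMap R A (counit (R := R) a))) := by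
        rw [HopfAlgebra.sum_antipode_mul_eq_algebraMap_counit ra]
    _ = Coalgebra.counit (R := R) a * ψ x := by
        rw [Algebra.algebraMap_eq_smul_one, map_smul, antipode_one', mul_smul_comm, mul_one,
          map_smul, smul_eq_mul]
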